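/- arXiv:2004.08244 — 3 statements merged into one kernel-verified Lean document; each statement's English description precedes it below -/
import Mathlib

section
/- Let ℓ be a prime with ℓ ≡ 5 (mod 8) and let u, v be positive integers with u² − v²ℓ = −4. Then the Legendre symbol (2u/ℓ) equals −1. -/
open NumberField

/-- If `ℓ ≡ 5 (mod 8)` is prime and `u, v > 0` satisfy `u² − v²ℓ = −4`,
then the Legendre symbol `(2u/ℓ)` equals `−1`. -/
theorem legendreSym_two_mul_u (ℓ : ℕ) [Fact ℓ.Prime] (hℓ5 : ℓ % 8 = 5)
    (u v : ℤ) (hu : 0 < u) (hv : 0 < v) (h : u ^ 2 - v ^ 2 * (ℓ : ℤ) = -4) :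
    legendreSym ℓ (2 * u) = -1 := by
  have hp : ℓ.Prime := Fact.out
  have hℓ5' : 5 ≤ ℓ := by omega
  have hℓ2 : ℓ ≠ 2 := by omega
  have hne : ((2 * u : ℤ) : ZMod ℓ) ≠ 0 := by
    rw [Ne, ZMod.intCast_zmod_eq_zero_iff_dvd]
    intro hdvd
    have hpz : Prime (ℓ : ℤ) := Nat.prime_iff_prime_int.mp hp
    have hdu : (ℓ : ℤ) ∣ u := by
      rcases hpz.dvd_mul.mp hdvd with h2 | h2
      · exfalso
        have := Int.le_of_dvd (by norm_num) h2
        omega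
      · exact h2
    have h4 : (ℓ : ℤ) ∣ 4 := by
      have hu2 : (ℓ : ℤ) ∣ u ^ 2 := Dvd.dvd.pow hdu (by norm_num)
      have : (4 : ℤ) = v ^ 2 * ℓ - u ^ 2 := by linarith
      rw [this]
      exact dvd_sub (dvd_mul_left _ _) hu2
    have := Int.le_of_dvd (by norm_num) h4
    omega
  rcases legendreSym.eq_one_or_neg_one ℓ hne with h1 | h1
  · exfalso
    rw [legendreSym.eq_one_iff ℓ hne] at h1
    obtain ⟨x, hx⟩ := h1
    push_cast at hx
    obtain ⟨i, hi⟩ : IsSquare (-1 : ZMod ℓ) := by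
      rw [ZMod.exists_sq_eq_neg_one_iff]; omega
    have hu4 : ((u : ZMod ℓ)) ^ 2 = -4 := by
      have hc := congrArg (fun z : ℤ => (z : ZMod ℓ)) h
      push_cast at hc
      rw [ZMod.natCast_self] at hc
      linear_combination hc
    have hx4 : x ^ 4 = -16 := by
      linear_combination (x * x + 2 * (u : ZMod ℓ)) * hx.symm + 4 * hu4
    have hi4 : (1 + i) ^ 4 = -4 := by
      linear_combination (-(i ^ 2 + 4 * i + 5)) * hi
    have hine : (1 + i : ZMod ℓ) ≠ 0 := by
      intro h0
      have h20 : (2 : ZMod ℓ) = 0 := by linear_combination (1 - i) * h0 - hi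
      have h2n : ((2 : ℕ) : ZMod ℓ) = 0 := by push_cast; exact h20
      rw [ZMod.natCast_eq_zero_iff] at h2n
      have := Nat.le_of_dvd (by norm_num) h2n
      omega
    set w : ZMod ℓ := x * (1 + i)⁻¹ with hw
    have h4ne : ((1 + i) ^ 4 : ZMod ℓ) ≠ 0 := pow_ne_zero _ hine
    have key : w ^ 4 * (1 + i) ^ 4 = x ^ 4 := by
      rw [hw]; field_simp
    rw [hi4, hx4] at key
    have h4ne' : (-4 : ZMod ℓ) ≠ 0 := by rw [← hi4]; exact h4ne
    have hw4 : w ^ 4 = 4 := by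
      have h2 : w ^ 4 * (-4) = 4 * (-4) := by linear_combination key
      exact mul_right_cancel₀ h4ne' h2
    have hfac : (w ^ 2 - 2) * (w ^ 2 + 2) = 0 := by linear_combination hw4
    rcases mul_eq_zero.mp hfac with hc | hc
    · have hsq : IsSquare (2 : ZMod ℓ) := ⟨w, by linear_combination -hc⟩
      rw [ZMod.exists_sq_eq_two_iff hℓ2] at hsq
      omega
    · have hsq : IsSquare (-2 : ZMod ℓ) := ⟨w, by linear_combination -hc⟩
      rw [ZMod.exists_sq_eq_neg_two_iff hℓ2] at hsq
      omega
  · exact h1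
end

section
/- Let ℓ = b² + c² be a squarefree positive integer with a, c odd positive integers and b positive, gcd(a, ℓ) = 1. Then ℚ(√(2a(ℓ + b√ℓ))) = ℚ(√(a(ℓ + c√ℓ))) as subfields of ℝ. -/
open NumberField

/-- If `ℓ = b² + c²` is squarefree with `a, c` odd positive and `b` positive,
`gcd(a, ℓ) = 1`, then `ℚ(√(2a(ℓ + b√ℓ))) = ℚ(√(a(ℓ + c√ℓ)))` inside `ℝ`. -/
theorem adjoin_sqrt_eq (a b c ℓ : ℕ) (ha : 0 < a) (hb : 0 < b) (hc : 0 < c)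
    (haodd : Odd a) (hcodd : Odd c) (hℓ : ℓ = b ^ 2 + c ^ 2) (hsf : Squarefree ℓ)
    (hcop : Nat.Coprime a ℓ) :
    IntermediateField.adjoin ℚ
        {Real.sqrt (2 * (a : ℝ) * ((ℓ : ℝ) + (b : ℝ) * Real.sqrt ℓ))} =
      IntermediateField.adjoin ℚ
        {Real.sqrt ((a : ℝ) * ((ℓ : ℝ) + (c : ℝ) * Real.sqrt ℓ))} := by
  have hℓ0 : 0 < ℓ := by rw [hℓ]; positivity
  have har : (0:ℝ) < a := by exact_mod_cast ha
  have hbr : (0:ℝ) < b := by exact_mod_cast hb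
  have hcr : (0:ℝ) < c := by exact_mod_cast hc
  have hlr : (0:ℝ) < ℓ := by exact_mod_cast hℓ0
  have hℓr : (ℓ:ℝ) = (b:ℝ)^2 + (c:ℝ)^2 := by exact_mod_cast congrArg (Nat.cast : ℕ → ℝ) hℓ
  set s : ℝ := Real.sqrt (ℓ:ℝ) with hs_def
  have hs0 : 0 < s := Real.sqrt_pos.mpr hlr
  have hs2 : s ^ 2 = (ℓ:ℝ) := Real.sq_sqrt hlr.le
  have hX : (0:ℝ) < 2 * (a:ℝ) * ((ℓ:ℝ) + (b:ℝ) * s) := by positivity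
  have hY : (0:ℝ) < (a:ℝ) * ((ℓ:ℝ) + (c:ℝ) * s) := by positivity
  set α : ℝ := Real.sqrt (2 * (a:ℝ) * ((ℓ:ℝ) + (b:ℝ) * s)) with hα_def
  set β : ℝ := Real.sqrt ((a:ℝ) * ((ℓ:ℝ) + (c:ℝ) * s)) with hβ_def
  have hα0 : 0 < α := Real.sqrt_pos.mpr hX
  have hβ0 : 0 < β := Real.sqrt_pos.mpr hY
  have hα2 : α ^ 2 = 2 * (a:ℝ) * ((ℓ:ℝ) + (b:ℝ) * s) := Real.sq_sqrt hX.le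
  have hβ2 : β ^ 2 = (a:ℝ) * ((ℓ:ℝ) + (c:ℝ) * s) := Real.sq_sqrt hY.le
  have key : α * β = (a:ℝ) * ((ℓ:ℝ) + ((b:ℝ) + (c:ℝ)) * s) := by
    have hrhs : (0:ℝ) ≤ (a:ℝ) * ((ℓ:ℝ) + ((b:ℝ) + (c:ℝ)) * s) := by positivity
    have hsq : (α * β) ^ 2 = ((a:ℝ) * ((ℓ:ℝ) + ((b:ℝ) + (c:ℝ)) * s)) ^ 2 := by
      rw [mul_pow, hα2, hβ2]
      linear_combination (-(a:ℝ)^2*((b:ℝ)^2+(c:ℝ)^2))*hs2 + (a:ℝ)^2*(ℓ:ℝ)*hℓr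
    calc α * β = Real.sqrt ((α * β)^2) := (Real.sqrt_sq (by positivity)).symm
      _ = Real.sqrt (((a:ℝ) * ((ℓ:ℝ) + ((b:ℝ) + (c:ℝ)) * s))^2) := by rw [hsq]
      _ = _ := Real.sqrt_sq hrhs
  apply le_antisymm
  · rw [IntermediateField.adjoin_le_iff, Set.singleton_subset_iff]
    set K := IntermediateField.adjoin ℚ {β}
    have hβK : β ∈ K := IntermediateField.mem_adjoin_simple_self ℚ β
    have hsK : s ∈ K := by
      have heq : s = (β ^ 2 - (a:ℝ) * (ℓ:ℝ)) / ((a:ℝ) * (c:ℝ)) := by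
        rw [hβ2]; field_simp; ring
      rw [heq]
      exact K.div_mem (K.sub_mem (K.pow_mem hβK 2)
        (K.mul_mem (natCast_mem K a) (natCast_mem K ℓ)))
        (K.mul_mem (natCast_mem K a) (natCast_mem K c))
    have heq : α = (a:ℝ) * ((ℓ:ℝ) + ((b:ℝ) + (c:ℝ)) * s) / β := by
      field_simp
      linarith [key]
    show α ∈ K
    rw [heq]
    exact K.div_mem (K.mul_mem (natCast_mem K a)
      (K.add_mem (natCast_mem K ℓ)
        (K.mul_mem (K.add_mem (natCast_mem K b) (natCast_mem K c)) hsK))) hβK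
  · rw [IntermediateField.adjoin_le_iff, Set.singleton_subset_iff]
    set K := IntermediateField.adjoin ℚ {α}
    have hαK : α ∈ K := IntermediateField.mem_adjoin_simple_self ℚ α
    have hsK : s ∈ K := by
      have heq : s = (α ^ 2 - 2 * (a:ℝ) * (ℓ:ℝ)) / (2 * (a:ℝ) * (b:ℝ)) := by
        rw [hα2]; field_simp; ring
      rw [heq]
      refine K.div_mem (K.sub_mem (K.pow_mem hαK 2) ?_) ?_
      · exact K.mul_mem (K.mul_mem (natCast_mem K 2) (natCast_mem K a)) (natCast_mem K ℓ)
      · exact K.mul_mem (K.mul_mem (natCast_mem K 2) (natCast_mem K a)) (natCast_mem K b)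
    have heq : β = (a:ℝ) * ((ℓ:ℝ) + ((b:ℝ) + (c:ℝ)) * s) / α := by
      field_simp
      linarith [key]
    show β ∈ K
    rw [heq]
    exact K.div_mem (K.mul_mem (natCast_mem K a)
      (K.add_mem (natCast_mem K ℓ)
        (K.mul_mem (K.add_mem (natCast_mem K b) (natCast_mem K c)) hsK))) hαK
end

section
/- Let ℓ ≡ 5 (mod 8) be prime and p ≡ 1 (mod 4) a prime with (p/ℓ) = 1. Write p^h = a² − b²ℓ for integers a, b (where h is the odd class number of ℚ(√ℓ) and (a + b√ℓ) generates a prime above p). Then the Legendre symbol (b/p) equals (ℓ/p)₄ · (a/p), where (ℓ/p)₄ is the rational fourth power residue symbol. -/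
open NumberField

/-- For `ℓ ≡ 5 (mod 8)` prime and `p ≡ 1 (mod 4)` prime with `(p/ℓ) = (ℓ/p) = 1`, if
`p^h = a² − ℓb²` with `h` odd and `p ∤ a`, `p ∤ b`, then `(b/p) = (ℓ/p)₄ (a/p)`, expressed
via Euler's criterion: `b^((p−1)/2) = ℓ^((p−1)/4) · a^((p−1)/2)` in `ZMod p`. -/
theorem legendre_b_eq_fourth_symbol (ℓ p : ℕ) [Fact ℓ.Prime] [Fact p.Prime]
    (hℓ5 : ℓ % 8 = 5) (hp1 : p % 4 = 1)
    (hQR : legendreSym p ℓ = 1) (hQR' : legendreSym ℓ p = 1)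
    (a b : ℤ) (h : ℕ) (hodd : Odd h) (hsol : (p : ℤ) ^ h = a ^ 2 - (ℓ : ℤ) * b ^ 2)
    (hpa : ¬ (p : ℤ) ∣ a) (hpb : ¬ (p : ℤ) ∣ b) :
    (b : ZMod p) ^ ((p - 1) / 2) =
      (ℓ : ZMod p) ^ ((p - 1) / 4) * (a : ZMod p) ^ ((p - 1) / 2) := by
  have hp : p.Prime := Fact.out
  obtain ⟨k, hk⟩ : ∃ k, p - 1 = 4 * k := ⟨(p - 1) / 4, by have := hp.two_le; omega⟩
  have h2 : (p - 1) / 2 = 2 * k := by have := hp.two_le; omega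
  have h4 : (p - 1) / 4 = k := by have := hp.two_le; omega
  have hA : (a : ZMod p) ≠ 0 := fun h0 =>
    hpa ((ZMod.intCast_zmod_eq_zero_iff_dvd a p).mp h0)
  have hB : (b : ZMod p) ≠ 0 := fun h0 =>
    hpb ((ZMod.intCast_zmod_eq_zero_iff_dvd b p).mp h0)
  have key : (a : ZMod p) ^ 2 = (ℓ : ZMod p) * (b : ZMod p) ^ 2 := by
    have := congrArg (Int.cast : ℤ → ZMod p) hsol
    push_cast at this
    rw [ZMod.natCast_self, zero_pow hodd.pos.ne'] at this
    linear_combination -this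
  have hL : (ℓ : ZMod p) = (a : ZMod p) ^ 2 * ((b : ZMod p) ^ 2)⁻¹ := by
    field_simp
    linear_combination -key
  have hAone : (a : ZMod p) ^ (4 * k) = 1 := by
    rw [← hk]; exact ZMod.pow_card_sub_one_eq_one hA
  have hBone : (b : ZMod p) ^ (4 * k) = 1 := by
    rw [← hk]; exact ZMod.pow_card_sub_one_eq_one hB
  have hBinv : ((b : ZMod p) ^ (2 * k))⁻¹ = (b : ZMod p) ^ (2 * k) := by
    have : ((b : ZMod p) ^ (2 * k)) * ((b : ZMod p) ^ (2 * k)) = 1 := by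
      rw [← pow_add]; convert hBone using 2; ring
    exact inv_eq_of_mul_eq_one_right this
  rw [h2, h4, hL, mul_pow, ← pow_mul, ← inv_pow, ← pow_mul]
  rw [mul_comm 2 k] at hBinv ⊢
  rw [inv_pow, hBinv, mul_right_comm, ← pow_add,
    show k * 2 + k * 2 = 4 * k by ring, hAone, one_mul]
end
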